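/- Let σ : ℝ → ℝ be continuously differentiable, T > 0, and let u, v : [0,1] × [0,T] → ℝ be continuously differentiable functions, with ∂_x v continuous, satisfying ∂_t u = ∂_x v and ∂_t v = ∂_x S on (0,1) × (0,T), where S = σ(u) + ∂_x v is assumed continuously differentiable in x, together with the traction-free boundary condition S(0,t) = 0 for all t ∈ (0,T). Define A(x,t) = ∫₀ˣ v(y,t) dy and g(x,t) = u(x,t) − A(x,t). Then for all (x,t) ∈ (0,1) × (0,T): ∂_t g(x,t) + σ(g(x,t)) = −( ∫₀¹ σ′( g(x,t) + (1−s)·A(x,t) ) ds )·A(x,t). -/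

import Mathlib

open MeasureTheory intervalIntegral


private lemma slice_hasDerivAt {T : ℝ} {f : ℝ → ℝ → ℝ}
    (hf : ContDiffOn ℝ 1 (fun p : ℝ × ℝ => f p.1 p.2) (Set.Icc 0 1 ×ˢ Set.Icc 0 T))
    {y s : ℝ} (hy : y ∈ Set.Icc (0:ℝ) 1) (hs : s ∈ Set.Ioo (0:ℝ) T) :
    HasDerivAt (fun s' => f y s')
      ((fderivWithin ℝ (fun p : ℝ × ℝ => f p.1 p.2)
        (Set.Icc 0 1 ×ˢ Set.Icc 0 T) (y, s)) (0, 1)) s := by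
  have hmem : ((y, s) : ℝ × ℝ) ∈ Set.Icc (0:ℝ) 1 ×ˢ Set.Icc (0:ℝ) T :=
    ⟨hy, Set.Ioo_subset_Icc_self hs⟩
  have h1 : HasFDerivWithinAt (fun p : ℝ × ℝ => f p.1 p.2)
      (fderivWithin ℝ (fun p : ℝ × ℝ => f p.1 p.2) (Set.Icc 0 1 ×ˢ Set.Icc 0 T) (y, s))
      (Set.Icc 0 1 ×ˢ Set.Icc 0 T) (y, s) :=
    ((hf.differentiableOn one_ne_zero) (y, s) hmem).hasFDerivWithinAt
  have hγ : HasDerivWithinAt (fun s' : ℝ => ((y : ℝ), s')) ((0 : ℝ), (1 : ℝ))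
      (Set.Icc 0 T) s :=
    ((hasDerivAt_const s y).prodMk (hasDerivAt_id s)).hasDerivWithinAt
  have hmaps : Set.MapsTo (fun s' : ℝ => ((y:ℝ), s')) (Set.Icc 0 T)
      (Set.Icc (0:ℝ) 1 ×ˢ Set.Icc (0:ℝ) T) := fun s' hs' => ⟨hy, hs'⟩
  have := h1.comp_hasDerivWithinAt s hγ hmaps
  exact this.hasDerivAt (Icc_mem_nhds hs.1 hs.2)

/-- The Andrews–Ball variable `g(x,t) = u(x,t) − ∫₀ˣ v(y,t)dy` of the viscoelastic
shear system `∂_t u = ∂_x v`, `∂_t v = ∂_x S`, `S = σ(u) + ∂_x v`, with traction-free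
boundary condition `S(0,t) = 0`, satisfies the ordinary differential equation
`∂_t g + σ(g) = −(∫₀¹ σ′(g + (1−s)A) ds)·A` where `A(x,t) = ∫₀ˣ v(y,t)dy`. -/
theorem andrews_ball_variable_ode
    (σ : ℝ → ℝ) (hσ : ContDiff ℝ 1 σ) (T : ℝ) (hT : 0 < T)
    (u v : ℝ → ℝ → ℝ)
    (hu : ContDiffOn ℝ 1 (fun p : ℝ × ℝ => u p.1 p.2) (Set.Icc 0 1 ×ˢ Set.Icc 0 T))
    (hv : ContDiffOn ℝ 1 (fun p : ℝ × ℝ => v p.1 p.2) (Set.Icc 0 1 ×ˢ Set.Icc 0 T))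
    (hvx : Continuous (fun p : ℝ × ℝ => deriv (fun x' => v x' p.2) p.1))
    (S : ℝ → ℝ → ℝ)
    (hS : ∀ x t, S x t = σ (u x t) + deriv (fun x' => v x' t) x)
    (hSx : ∀ t ∈ Set.Ioo (0 : ℝ) T, ContDiffOn ℝ 1 (fun x => S x t) (Set.Ioo 0 1))
    (hpde₁ : ∀ x ∈ Set.Ioo (0 : ℝ) 1, ∀ t ∈ Set.Ioo (0 : ℝ) T,
      deriv (fun s => u x s) t = deriv (fun x' => v x' t) x)
    (hpde₂ : ∀ x ∈ Set.Ioo (0 : ℝ) 1, ∀ t ∈ Set.Ioo (0 : ℝ) T,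
      deriv (fun s => v x s) t = deriv (fun x' => S x' t) x)
    (hbc : ∀ t ∈ Set.Ioo (0 : ℝ) T, S 0 t = 0)
    (A g : ℝ → ℝ → ℝ)
    (hA : ∀ x t, A x t = ∫ y in (0 : ℝ)..x, v y t)
    (hg : ∀ x t, g x t = u x t - A x t) :
    ∀ x ∈ Set.Ioo (0 : ℝ) 1, ∀ t ∈ Set.Ioo (0 : ℝ) T,
      deriv (fun s => g x s) t + σ (g x t) =
        -(∫ s in (0 : ℝ)..1, deriv σ (g x t + (1 - s) * A x t)) * A x t := by
  intro x hx t ht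
  have hUD : UniqueDiffOn ℝ (Set.Icc (0:ℝ) 1 ×ˢ Set.Icc (0:ℝ) T) :=
    (uniqueDiffOn_Icc one_pos).prod (uniqueDiffOn_Icc hT)
  set P : ℝ → ℝ → ℝ := fun y s =>
    (fderivWithin ℝ (fun p : ℝ × ℝ => v p.1 p.2)
      (Set.Icc 0 1 ×ˢ Set.Icc 0 T) (y, s)) (0, 1) with hPdef
  have hx01 : x ∈ Set.Icc (0:ℝ) 1 := Set.Ioo_subset_Icc_self hx
  have hVd : ∀ y ∈ Set.Icc (0:ℝ) 1, ∀ s ∈ Set.Ioo (0:ℝ) T,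
      HasDerivAt (fun s' => v y s') (P y s) s := fun y hy s hs => slice_hasDerivAt hv hy hs
  have hPc : ContinuousOn (fun p : ℝ × ℝ => P p.1 p.2)
      (Set.Icc (0:ℝ) 1 ×ˢ Set.Icc (0:ℝ) T) :=
    (hv.continuousOn_fderivWithin hUD le_rfl).clm_apply continuousOn_const
  -- epsilon
  set ε : ℝ := min t (T - t) / 2 with hεdef
  have hmin : 0 < min t (T - t) := lt_min ht.1 (sub_pos.2 ht.2)
  have hε0 : 0 < ε := by positivity
  have hεt : ε ≤ t / 2 := by
    have := min_le_left t (T - t); rw [hεdef]; linarith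
  have hεT : ε ≤ (T - t) / 2 := by
    have := min_le_right t (T - t); rw [hεdef]; linarith
  have hsub : Set.Icc (t - ε) (t + ε) ⊆ Set.Ioo (0:ℝ) T := by
    intro s hs
    exact ⟨by have := ht.1; have := hs.1; linarith, by have := hs.2; linarith⟩
  have hballIcc : Metric.ball t ε ⊆ Set.Icc (t - ε) (t + ε) := by
    rw [Real.ball_eq_Ioo]; exact Set.Ioo_subset_Icc_self
  -- bound
  have hKc : IsCompact (Set.Icc (0:ℝ) 1 ×ˢ Set.Icc (t - ε) (t + ε)) :=
    isCompact_Icc.prod isCompact_Icc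
  have hKsub : (Set.Icc (0:ℝ) 1 ×ˢ Set.Icc (t - ε) (t + ε)) ⊆
      Set.Icc (0:ℝ) 1 ×ˢ Set.Icc (0:ℝ) T :=
    Set.prod_mono Set.Subset.rfl (hsub.trans Set.Ioo_subset_Icc_self)
  obtain ⟨C, hC⟩ := hKc.exists_bound_of_continuousOn (hPc.mono hKsub)
  have huIoc : Set.uIoc (0:ℝ) x = Set.Ioc 0 x := Set.uIoc_of_le hx.1.le
  have hIocsub : Set.Ioc (0:ℝ) x ⊆ Set.Icc (0:ℝ) 1 :=
    fun y hy => ⟨hy.1.le, hy.2.trans hx.2.le⟩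
  have hIccsub : Set.uIcc (0:ℝ) x ⊆ Set.Icc (0:ℝ) 1 := by
    rw [Set.uIcc_of_le hx.1.le]; exact Set.Icc_subset_Icc le_rfl hx.2.le
  have hcontV : ∀ s ∈ Set.Icc (0:ℝ) T, ContinuousOn (fun y => v y s) (Set.Icc (0:ℝ) 1) :=
    fun s hs => hv.continuousOn.comp
      (continuous_id.prodMk continuous_const).continuousOn (fun y hy => ⟨hy, hs⟩)
  have hcontP : ∀ s ∈ Set.Icc (0:ℝ) T, ContinuousOn (fun y => P y s) (Set.Icc (0:ℝ) 1) :=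
    fun s hs => hPc.comp
      (continuous_id.prodMk continuous_const).continuousOn (fun y hy => ⟨hy, hs⟩)
  -- differentiation under the integral sign
  have hmeas : ∀ᶠ s in nhds t, AEStronglyMeasurable (fun y => v y s)
      (volume.restrict (Set.uIoc (0:ℝ) x)) := by
    filter_upwards [Ioo_mem_nhds ht.1 ht.2] with s hs
    rw [huIoc]
    exact (((hcontV s (Set.Ioo_subset_Icc_self hs)).mono hIocsub)).aestronglyMeasurable
      measurableSet_Ioc
  have hint : IntervalIntegrable (fun y => v y t) volume 0 x :=
    ((hcontV t (Set.Ioo_subset_Icc_self ht)).mono hIccsub).intervalIntegrable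
  have hmeas' : AEStronglyMeasurable (fun y => P y t) (volume.restrict (Set.uIoc (0:ℝ) x)) := by
    rw [huIoc]
    exact (((hcontP t (Set.Ioo_subset_Icc_self ht)).mono hIocsub)).aestronglyMeasurable
      measurableSet_Ioc
  have hbdd : ∀ᵐ y ∂(volume : Measure ℝ), y ∈ Set.uIoc (0:ℝ) x →
      ∀ s ∈ Metric.ball t ε, ‖P y s‖ ≤ C :=
    Filter.Eventually.of_forall fun y hy s hs =>
      hC (y, s) ⟨hIocsub (huIoc ▸ hy), hballIcc hs⟩
  have hdiff : ∀ᵐ y ∂(volume : Measure ℝ), y ∈ Set.uIoc (0:ℝ) x →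
      ∀ s ∈ Metric.ball t ε, HasDerivAt (fun s' => v y s') (P y s) s :=
    Filter.Eventually.of_forall fun y hy s hs =>
      hVd y (hIocsub (huIoc ▸ hy)) s (hsub (hballIcc hs))
  have hder := intervalIntegral.hasDerivAt_integral_of_dominated_loc_of_deriv_le
    (F := fun s y => v y s) (F' := fun s y => P y s) (bound := fun _ => C)
    (a := 0) (b := x) (μ := volume) (Metric.ball_mem_nhds t hε0) hmeas hint hmeas' hbdd
    intervalIntegrable_const hdiff
  have hAder : HasDerivAt (fun s => A x s) (∫ y in (0:ℝ)..x, P y t) t := by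
    have hfe : (fun s => A x s) = fun s => ∫ y in (0:ℝ)..x, v y s := funext fun s => hA x s
    rw [hfe]; exact hder.2
  -- compute the integral of P via FTC for S
  have hScont : ContinuousOn (fun y => S y t) (Set.Icc (0:ℝ) 1) := by
    have h1 : ContinuousOn (fun y => u y t) (Set.Icc (0:ℝ) 1) :=
      hu.continuousOn.comp (continuous_id.prodMk continuous_const).continuousOn
        (fun y hy => ⟨hy, Set.Ioo_subset_Icc_self ht⟩)
    have h2 : Continuous (fun y => deriv (fun x' => v x' t) y) :=
      hvx.comp (continuous_id.prodMk continuous_const)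
    have hfe : (fun y => S y t) = fun y => σ (u y t) + deriv (fun x' => v x' t) y :=
      funext fun y => hS y t
    rw [hfe]
    exact (hσ.continuous.comp_continuousOn h1).add h2.continuousOn
  have hSder : ∀ y ∈ Set.Ioo (0:ℝ) x, HasDerivAt (fun y' => S y' t) (P y t) y := by
    intro y hy
    have hy1 : y ∈ Set.Ioo (0:ℝ) 1 := ⟨hy.1, hy.2.trans hx.2⟩
    have hd : DifferentiableAt ℝ (fun y' => S y' t) y :=
      (((hSx t ht).differentiableOn one_ne_zero) y hy1).differentiableAt
        (isOpen_Ioo.mem_nhds hy1)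
    have heq : deriv (fun y' => S y' t) y = P y t := by
      rw [← hpde₂ y hy1 t ht]
      exact (hVd y (Set.Ioo_subset_Icc_self hy1) t ht).deriv
    exact heq ▸ hd.hasDerivAt
  have hPS : ∫ y in (0:ℝ)..x, P y t = S x t := by
    rw [intervalIntegral.integral_eq_sub_of_hasDerivAt_of_le hx.1.le
      (hScont.mono (Set.Icc_subset_Icc le_rfl hx.2.le)) hSder hder.1, hbc t ht, sub_zero]
  -- derivative of u in t
  have hUder : HasDerivAt (fun s => u x s) (deriv (fun x' => v x' t) x) t := by
    have h0 := slice_hasDerivAt hu hx01 ht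
    have := h0.deriv
    rw [hpde₁ x hx t ht] at this
    exact this ▸ h0
  have hgder : HasDerivAt (fun s => g x s)
      (deriv (fun x' => v x' t) x - ∫ y in (0:ℝ)..x, P y t) t := by
    have hfe : (fun s => g x s) = fun s => u x s - A x s := funext fun s => hg x s
    rw [hfe]; exact hUder.sub hAder
  have hgt : deriv (fun s => g x s) t = -σ (u x t) := by
    rw [hgder.deriv, hPS, hS x t]; ring
  -- final FTC in s
  have hu_eq : u x t = g x t + A x t := by have := hg x t; linarith
  have hφ : ∀ s ∈ Set.uIcc (0:ℝ) 1,
      HasDerivAt (fun s' => σ (g x t + (1 - s') * A x t))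
        (deriv σ (g x t + (1 - s) * A x t) * (-1 * A x t)) s := by
    intro s _
    have h1 : HasDerivAt (fun s' : ℝ => 1 - s') (-1) s := (hasDerivAt_id s).const_sub 1
    have h3 : HasDerivAt (fun s' : ℝ => g x t + (1 - s') * A x t) (-1 * A x t) s :=
      (h1.mul_const (A x t)).const_add (g x t)
    have hσd : HasDerivAt σ (deriv σ (g x t + (1 - s) * A x t))
        (g x t + (1 - s) * A x t) :=
      ((hσ.differentiable one_ne_zero) _).hasDerivAt
    exact hσd.comp s h3
  have hφint : IntervalIntegrable
      (fun s => deriv σ (g x t + (1 - s) * A x t) * (-1 * A x t)) volume 0 1 := by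
    apply Continuous.intervalIntegrable
    exact (((hσ.continuous_deriv le_rfl).comp (continuous_const.add ((continuous_const.sub continuous_id).mul continuous_const))).mul continuous_const)
  have hi := intervalIntegral.integral_eq_sub_of_hasDerivAt hφ hφint
  rw [intervalIntegral.integral_mul_const] at hi
  norm_num at hi
  rw [hgt, hu_eq]
  linear_combination -hi
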